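/- Let δ > 0 and define (p_n) by p₀ = 1+δ, p_{n+1} = 1+δ − 1/(1+δ+p_n); let ρ₀ := 1, ρ_m := 1/(1+δ+p_{m−1}) for m ≥ 1, q_n := ∏_{m=0}^n ρ_m, and N := ⌊δ^{−1/2}⌋. There exist constants C > 0 and δ₀ ∈ (0,1), independent of δ, such that for all δ ∈ (0,δ₀) the tail of the series satisfies Σ_{n=N}^∞ q_n ≤ C (in particular the series Σ_{n=0}^∞ q_n converges). -/

import Mathlib

open Real

theorem stmt_9 :
    ∃ C > (0:ℝ), ∃ δ₀ ∈ Set.Ioo (0:ℝ) 1, ∀ δ ∈ Set.Ioo (0:ℝ) δ₀,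
      ∀ p ρ q : ℕ → ℝ,
        p 0 = 1 + δ →
        (∀ n, p (n + 1) = 1 + δ - 1 / (1 + δ + p n)) →
        ρ 0 = 1 →
        (∀ m, 1 ≤ m → ρ m = 1 / (1 + δ + p (m - 1))) →
        (∀ n, q n = ∏ m ∈ Finset.range (n + 1), ρ m) →
        Summable q ∧ ∑' k : ℕ, q (⌊δ ^ (-(1:ℝ)/2)⌋₊ + k) ≤ C := by
  refine ⟨2, by norm_num, 1/2, by constructor <;> norm_num, ?_⟩
  rintro δ ⟨hδ0, hδh⟩ p ρ q hp0 hpr hρ0 hρm hq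
  have hδ1 : δ < 1 := by linarith
  set s := Real.sqrt (2*δ) with hsdef
  have hs0 : 0 < s := Real.sqrt_pos.mpr (by linarith)
  have hs2 : s^2 = 2*δ := Real.sq_sqrt (by linarith)
  have hs1 : s < 1 := by nlinarith
  -- p n ≥ s
  have hpl : ∀ n, s ≤ p n := by
    intro n
    induction n with
    | zero => rw [hp0]; nlinarith
    | succ n ih =>
      rw [hpr n]
      have hd : (0:ℝ) < 1 + δ + s := by linarith
      have hd2 : (0:ℝ) < 1 + δ + p n := by linarith
      have h1 : 1/(1+δ+p n) ≤ 1/(1+δ+s) :=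
        one_div_le_one_div_of_le hd (by linarith)
      have h2 : 1/(1+δ+s) ≤ 1 + δ - s := by
        rw [div_le_iff₀ hd]; nlinarith
      linarith
  have hppos : ∀ n, 0 < p n := fun n => lt_of_lt_of_le hs0 (hpl n)
  -- p n ≥ 1/(n+1)
  have hp2 : ∀ n : ℕ, 1/((n:ℝ)+1) ≤ p n := by
    intro n
    induction n with
    | zero => rw [hp0]; norm_num; linarith
    | succ n ih =>
      rw [hpr n]
      have hn1 : (0:ℝ) < (n:ℝ)+1 := by positivity
      have hd2 : (0:ℝ) < 1 + δ + p n := by linarith [hppos n]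
      have h1 : 1/(1+δ+p n) ≤ 1/(1 + 1/((n:ℝ)+1)) :=
        one_div_le_one_div_of_le (by positivity) (by linarith)
      have key : (1:ℝ) + 1/((n:ℝ)+1) = ((n:ℝ)+2)/((n:ℝ)+1) := by
        have hne : ((n:ℝ)+1) ≠ 0 := by positivity
        field_simp
        ring
      have h2 : 1/(1 + 1/((n:ℝ)+1)) = ((n:ℝ)+1)/((n:ℝ)+2) := by
        rw [key, one_div_div]
      have h3 : 1 - ((n:ℝ)+1)/((n:ℝ)+2) = 1/((n:ℝ)+2) := by
        have hne : ((n:ℝ)+2) ≠ 0 := by positivity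
        field_simp
        ring
      have h4 : (1:ℝ)/((n:ℝ)+1+1) = 1/((n:ℝ)+2) := by
        rw [show ((n:ℝ)+1+1) = (n:ℝ)+2 by ring]
      push_cast
      rw [h2] at h1
      linarith
  set r : ℝ := 1/(1+s) with hrdef
  have hr0 : 0 < r := by positivity
  have hr1 : r < 1 := by
    rw [hrdef, div_lt_one (by linarith)]; linarith
  -- ρ bounds
  have hρpos : ∀ m, 0 < ρ m := by
    intro m
    match m with
    | 0 => rw [hρ0]; norm_num
    | Nat.succ k =>
      rw [hρm (k+1) (by omega)]
      simp only [Nat.add_sub_cancel]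
      have := hppos k
      positivity
  have hρr : ∀ m, 1 ≤ m → ρ m ≤ r := by
    intro m hm
    match m, hm with
    | Nat.succ k, _ =>
      rw [hρm (k+1) (by omega)]
      simp only [Nat.add_sub_cancel]
      exact one_div_le_one_div_of_le (by linarith) (by linarith [hpl k])
  have hρb : ∀ n : ℕ, ρ (n+1) ≤ ((n:ℝ)+1)/((n:ℝ)+2) := by
    intro n
    rw [hρm (n+1) (by omega)]
    simp only [Nat.add_sub_cancel]
    have hn1 : (0:ℝ) < (n:ℝ)+1 := by positivity
    have h1 : 1/(1+δ+p n) ≤ 1/(1 + 1/((n:ℝ)+1)) :=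
      one_div_le_one_div_of_le (by positivity) (by linarith [hp2 n])
    have key : (1:ℝ) + 1/((n:ℝ)+1) = ((n:ℝ)+2)/((n:ℝ)+1) := by
      have hne : ((n:ℝ)+1) ≠ 0 := by positivity
      field_simp
      ring
    have h2 : 1/(1 + 1/((n:ℝ)+1)) = ((n:ℝ)+1)/((n:ℝ)+2) := by
      rw [key, one_div_div]
    linarith
  -- q facts
  have hq0 : q 0 = 1 := by rw [hq 0, Finset.prod_range_one, hρ0]
  have hqs : ∀ n, q (n+1) = q n * ρ (n+1) := by
    intro n; rw [hq, hq, Finset.prod_range_succ]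
  have hqpos : ∀ n, 0 < q n := by
    intro n
    induction n with
    | zero => rw [hq0]; norm_num
    | succ n ih => rw [hqs n]; exact mul_pos ih (hρpos _)
  have hq1 : ∀ n : ℕ, q n ≤ 1/((n:ℝ)+1) := by
    intro n
    induction n with
    | zero => rw [hq0]; norm_num
    | succ n ih =>
      rw [hqs n]
      have h1 : q n * ρ (n+1) ≤ (1/((n:ℝ)+1)) * (((n:ℝ)+1)/((n:ℝ)+2)) :=
        mul_le_mul ih (hρb n) (hρpos _).le (by positivity)
      have h2 : (1/((n:ℝ)+1)) * (((n:ℝ)+1)/((n:ℝ)+2)) = 1/((n:ℝ)+2) := by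
        rw [div_mul_div_comm, one_mul, div_eq_div_iff (by positivity) (by positivity)]
        ring
      have h4 : (1:ℝ)/((n:ℝ)+1+1) = 1/((n:ℝ)+2) := by
        rw [show ((n:ℝ)+1+1) = (n:ℝ)+2 by ring]
      push_cast
      rw [h2] at h1
      linarith
  have hgeo : ∀ n k : ℕ, q (n+k) ≤ q n * r^k := by
    intro n k
    induction k with
    | zero => simp
    | succ k ih =>
      have : n + (k+1) = (n+k) + 1 := by omega
      rw [this, hqs (n+k), pow_succ, ← mul_assoc]
      exact mul_le_mul ih (hρr _ (by omega)) (hρpos _).le (mul_nonneg (hqpos n).le (pow_nonneg hr0.le k))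
  -- summability
  have hsumgeo : Summable (fun k : ℕ => r ^ k) :=
    summable_geometric_of_lt_one hr0.le hr1
  have hsumq : Summable q := by
    apply Summable.of_nonneg_of_le (fun n => (hqpos n).le) (fun n => ?_) hsumgeo
    have := hgeo 0 n
    simpa [hq0] using this
  refine ⟨hsumq, ?_⟩
  set N := ⌊δ ^ (-(1:ℝ)/2)⌋₊ with hN
  have htail : Summable (fun k : ℕ => q (N + k)) :=
    hsumq.comp_injective (fun a b h => by omega)
  have hgsum : Summable (fun k : ℕ => q N * r ^ k) := hsumgeo.mul_left _
  have htsum : ∑' k : ℕ, q (N + k) ≤ ∑' k : ℕ, q N * r ^ k :=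
    Summable.tsum_le_tsum (fun k => hgeo N k) htail hgsum
  have hgeoval : ∑' k : ℕ, q N * r ^ k = q N * (1 - r)⁻¹ := by
    rw [tsum_mul_left, tsum_geometric_of_lt_one hr0.le hr1]
  -- bound q N
  have htδ : (0:ℝ) < Real.sqrt δ := Real.sqrt_pos.mpr hδ0
  have hrp : δ ^ (-(1:ℝ)/2) = (Real.sqrt δ)⁻¹ := by
    rw [Real.sqrt_eq_rpow, ← Real.rpow_neg hδ0.le]
    norm_num
  have hNδ : (Real.sqrt δ)⁻¹ < (N:ℝ)+1 := by
    rw [← hrp]; exact Nat.lt_floor_add_one _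
  have hqN : q N ≤ Real.sqrt δ := by
    refine (hq1 N).trans ?_
    rw [div_le_iff₀ (by positivity)]
    have h := mul_inv_cancel₀ (ne_of_gt htδ)
    nlinarith [mul_lt_mul_of_pos_left hNδ htδ]
  -- final bound
  have h1r : (1 - r)⁻¹ = (1+s)/s := by
    have : 1 - r = s/(1+s) := by
      rw [hrdef, eq_div_iff (by linarith)]; field_simp; ring
    rw [this, inv_div]
  have hts : Real.sqrt δ ≤ s := Real.sqrt_le_sqrt (by linarith)
  have ht1 : Real.sqrt δ < 1 := by
    nlinarith [Real.sq_sqrt hδ0.le, Real.sqrt_nonneg δ]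
  have hfin : q N * (1 - r)⁻¹ ≤ 2 := by
    rw [h1r]
    have h2 : q N * ((1+s)/s) ≤ Real.sqrt δ * ((1+s)/s) :=
      mul_le_mul_of_nonneg_right hqN (by positivity)
    have h3 : Real.sqrt δ * ((1+s)/s) ≤ 2 := by
      rw [mul_div_assoc', div_le_iff₀ hs0]
      nlinarith [mul_nonneg hs0.le (by linarith : (0:ℝ) ≤ 1 - Real.sqrt δ)]
    linarith
  calc ∑' k : ℕ, q (N + k) ≤ q N * (1 - r)⁻¹ := by rw [← hgeoval]; exact htsum
    _ ≤ 2 := hfin
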